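/- Let p > 0 and c > 0. Let Q = [0,1]², R = [1/3,2/3]², and for each n ≥ 1 let Q_n = [2^{−n}, 2^{−n+1}]² and let A_n : Q → Q_n be the affine map A_n(x,y) = ((x+1)/2^n, (y+1)/2^n). Suppose (g_n)_{n≥1} is a sequence of homeomorphisms of Q onto itself such that: (i) each g_n equals the identity outside R; (ii) g_n and g_n⁻¹ are Lipschitz with [g_n]_{Lip} ≤ c·n^p and [g_n⁻¹]_{Lip} ≤ c·n^p; and (iii) h_top(g_n) → ∞ as n → ∞. Define f : ℝ² → ℝ² by f = A_n ∘ g_n ∘ A_n⁻¹ on Q_n for each n ≥ 1, and f = identity on the complement of ⋃_n Q_n. Then: f is an orientation-preserving homeomorphism of ℝ² equal to the identity outside Q and mapping Q onto Q; the restriction of f to Q has infinite topological entropy; and there exist constants C > 0 and δ > 0 such that for all z, w ∈ ℝ² with 0 < |z − w| < δ, |f(z) − f(w)| ≤ C·|z − w|·(log(1/|z − w|))^p, and the same bound (with the same C, δ) holds for f⁻¹. In particular, f and f⁻¹ are α-Hölder continuous for every 0 < α < 1. -/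

import Mathlib

open Set Filter

/-- The vector `(1,1) ∈ ℝ²`. -/
noncomputable def onev : EuclideanSpace ℝ (Fin 2) :=
  EuclideanSpace.single 0 1 + EuclideanSpace.single 1 1

/-- The unit square `Q = [0,1]²`. -/
def unitSq : Set (EuclideanSpace ℝ (Fin 2)) := {x | ∀ i, x i ∈ Set.Icc (0 : ℝ) 1}

/-- The middle square `R = [1/3,2/3]²`. -/
def midSq : Set (EuclideanSpace ℝ (Fin 2)) := {x | ∀ i, x i ∈ Set.Icc (1/3 : ℝ) (2/3)}

/-- The dyadic square `Q_n = [2^{-n}, 2^{-n+1}]²`. -/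
def dyadicSq (n : ℕ) : Set (EuclideanSpace ℝ (Fin 2)) :=
  {x | ∀ i, x i ∈ Set.Icc (((2 : ℝ) ^ n)⁻¹) (2 * ((2 : ℝ) ^ n)⁻¹)}

/-- The affine map `A_n(x,y) = ((x+1)/2^n, (y+1)/2^n)`, taking `Q` onto `Q_n`. -/
noncomputable def affSq (n : ℕ) (x : EuclideanSpace ℝ (Fin 2)) : EuclideanSpace ℝ (Fin 2) :=
  ((2 : ℝ) ^ n)⁻¹ • (x + onev)

/-- The inverse `A_n⁻¹(x,y) = (2^n·x - 1, 2^n·y - 1)`. -/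
noncomputable def affSqInv (n : ℕ) (x : EuclideanSpace ℝ (Fin 2)) : EuclideanSpace ℝ (Fin 2) :=
  (2 : ℝ) ^ n • x - onev

namespace InfEnt

local notation "E" => EuclideanSpace ℝ (Fin 2)

lemma onev_apply (i : Fin 2) : onev i = 1 := by
  fin_cases i <;>
    simp [onev, EuclideanSpace.single_apply, PiLp.add_apply]

lemma affSq_affSqInv (n : ℕ) (x : E) : affSq n (affSqInv n x) = x := by
  have h2 : ((2:ℝ)^n) ≠ 0 := by positivity
  simp only [affSq, affSqInv, sub_add_cancel, smul_smul, inv_mul_cancel₀ h2, one_smul]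

lemma affSqInv_affSq (n : ℕ) (x : E) : affSqInv n (affSq n x) = x := by
  have h2 : ((2:ℝ)^n) ≠ 0 := by positivity
  simp only [affSq, affSqInv, smul_smul, mul_inv_cancel₀ h2, one_smul, add_sub_cancel_right]

lemma affSq_apply (n : ℕ) (x : E) (i : Fin 2) :
    affSq n x i = ((2:ℝ)^n)⁻¹ * (x i + 1) := by
  simp [affSq, onev_apply, PiLp.smul_apply, PiLp.add_apply]
  ring

lemma affSqInv_apply (n : ℕ) (x : E) (i : Fin 2) :
    affSqInv n x i = (2:ℝ)^n * x i - 1 := by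
  simp [affSqInv, onev_apply, PiLp.smul_apply, PiLp.sub_apply]

lemma dist_affSq (n : ℕ) (x y : E) :
    dist (affSq n x) (affSq n y) = ((2:ℝ)^n)⁻¹ * dist x y := by
  rw [affSq, affSq, dist_smul₀, dist_add_right]
  congr 1
  rw [Real.norm_eq_abs, abs_of_pos (by positivity)]

lemma dist_affSqInv (n : ℕ) (x y : E) :
    dist (affSqInv n x) (affSqInv n y) = (2:ℝ)^n * dist x y := by
  rw [affSqInv, affSqInv, dist_sub_right, dist_smul₀]
  congr 1
  rw [Real.norm_eq_abs, abs_of_pos (by positivity)]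

lemma affSq_mem_dyadic {n : ℕ} {x : E} (hx : x ∈ unitSq) : affSq n x ∈ dyadicSq n := by
  intro i
  have h := hx i
  have h2 : (0:ℝ) < ((2:ℝ)^n)⁻¹ := by positivity
  rw [affSq_apply]
  constructor
  · nlinarith [h.1, h.2]
  · nlinarith [h.1, h.2]

lemma affSqInv_mem_unit {n : ℕ} {x : E} (hx : x ∈ dyadicSq n) : affSqInv n x ∈ unitSq := by
  intro i
  have h := hx i
  have h2 : (0:ℝ) < ((2:ℝ)^n) := by positivity
  rw [affSqInv_apply]
  constructor
  · have h1 := mul_le_mul_of_nonneg_left h.1 h2.le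
    rw [mul_inv_cancel₀ h2.ne'] at h1
    linarith
  · have h1 := mul_le_mul_of_nonneg_left h.2 h2.le
    rw [mul_comm (2:ℝ) ((2:ℝ)^n)⁻¹, ← mul_assoc, mul_inv_cancel₀ h2.ne', one_mul] at h1
    linarith

lemma dyadic_subset_unit {n : ℕ} (hn : 1 ≤ n) : dyadicSq n ⊆ unitSq := by
  intro x hx i
  have h := hx i
  have h1 : (0:ℝ) < ((2:ℝ)^n)⁻¹ := by positivity
  have h2 : 2 * ((2:ℝ)^n)⁻¹ ≤ 1 := by
    rw [mul_inv_le_iff₀ (by positivity)]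
    calc (2:ℝ) = 2^1 := (pow_one 2).symm
    _ ≤ 2^n := pow_le_pow_right₀ one_le_two hn
    _ = 1 * 2^n := (one_mul _).symm
  exact ⟨le_trans h1.le h.1, le_trans h.2 h2⟩

lemma midSq_subset_unit : midSq ⊆ unitSq := by
  intro x hx i
  have h := hx i
  exact ⟨by linarith [h.1], by linarith [h.2]⟩

lemma coord_le_dist (x y : E) (i : Fin 2) : |x i - y i| ≤ dist x y := by
  rw [EuclideanSpace.dist_eq]
  have h1 : |x i - y i| = Real.sqrt (dist (x i) (y i) ^ 2) := by
    rw [Real.sqrt_sq dist_nonneg, Real.dist_eq]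
  rw [h1]
  apply Real.sqrt_le_sqrt
  exact Finset.single_le_sum (f := fun j => dist (x j) (y j) ^ 2)
    (fun j _ => by positivity) (Finset.mem_univ i)

lemma dist_le_of_coord {x y : E} {t : ℝ} (ht : 0 ≤ t) (h : ∀ i, |x i - y i| ≤ t) :
    dist x y ≤ 2 * t := by
  rw [EuclideanSpace.dist_eq]
  have : ∑ i, dist (x i) (y i) ^ 2 ≤ (2*t)^2 := by
    rw [Fin.sum_univ_two]
    have h0 := h 0; have h1 := h 1
    rw [Real.dist_eq, Real.dist_eq]
    nlinarith [abs_nonneg (x 0 - y 0), abs_nonneg (x 1 - y 1), sq_abs (x 0 - y 0), sq_abs (x 1 - y 1)]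
  calc Real.sqrt (∑ i, dist (x i) (y i) ^ 2) ≤ Real.sqrt ((2*t)^2) := Real.sqrt_le_sqrt this
  _ = 2*t := Real.sqrt_sq (by linarith)

def Moving (x : E) : Prop := ∃ n, 1 ≤ n ∧ x ∈ dyadicSq n ∧ affSqInv n x ∈ midSq

lemma mapsTo_mid {G1 : E → E} (hb : Set.BijOn G1 unitSq unitSq)
    (hs : ∀ x ∈ unitSq \ midSq, G1 x = x) : Set.MapsTo G1 midSq midSq := by
  intro x hx
  by_contra hy
  have hxu : x ∈ unitSq := midSq_subset_unit hx
  have hyu : G1 x ∈ unitSq := hb.mapsTo hxu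
  have h1 : G1 (G1 x) = G1 x := hs _ ⟨hyu, hy⟩
  have hxy := hb.injOn hyu hxu h1
  exact hy (by rw [hxy]; exact hx)

lemma fix_formula {G1 : E → E} {n : ℕ} {x : E} (hx : x ∈ dyadicSq n)
    (hu : affSqInv n x ∉ midSq) (hs : ∀ y ∈ unitSq \ midSq, G1 y = y) :
    affSq n (G1 (affSqInv n x)) = x := by
  rw [hs _ ⟨affSqInv_mem_unit hx, hu⟩, affSq_affSqInv]

section Generic

variable {G : ℕ → E → E} {F : E → E} {c p : ℝ}

lemma not_moving_fix
    (hFdef : ∀ n, 1 ≤ n → ∀ x ∈ dyadicSq n, F x = affSq n (G n (affSqInv n x)))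
    (hFid : ∀ x, (∀ n, 1 ≤ n → x ∉ dyadicSq n) → F x = x)
    (hGsupp : ∀ n, 1 ≤ n → ∀ y ∈ unitSq \ midSq, G n y = y)
    {x : E} (h : ¬ Moving x) : F x = x := by
  by_cases hd : ∃ n, 1 ≤ n ∧ x ∈ dyadicSq n
  · obtain ⟨n, hn, hx⟩ := hd
    have hu : affSqInv n x ∉ midSq := fun hm => h ⟨n, hn, hx, hm⟩
    rw [hFdef n hn x hx]
    exact fix_formula hx hu (hGsupp n hn)
  · exact hFid x (fun n hn hx => hd ⟨n, hn, hx⟩)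

lemma moving_coord {n : ℕ} {x : E} (hx : x ∈ dyadicSq n) (hu : affSqInv n x ∈ midSq)
    (i : Fin 2) :
    x i ∈ Set.Icc ((4/3) * ((2:ℝ)^n)⁻¹) ((5/3) * ((2:ℝ)^n)⁻¹) := by
  have h := hu i
  rw [affSqInv_apply] at h
  have h2 : (0:ℝ) < 2^n := by positivity
  have hl : (4:ℝ)/3 ≤ 2^n * x i := by linarith [h.1]
  have hr : (2:ℝ)^n * x i ≤ 5/3 := by linarith [h.2]
  constructor
  · rw [← div_eq_mul_inv, div_le_iff₀ h2]
    nlinarith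
  · rw [← div_eq_mul_inv, le_div_iff₀ h2]
    nlinarith

lemma sep {n : ℕ} {x w : E} (hx : x ∈ dyadicSq n) (hu : affSqInv n x ∈ midSq)
    (hw : w ∉ dyadicSq n) : (1/3) * ((2:ℝ)^n)⁻¹ ≤ dist x w := by
  simp only [dyadicSq, Set.mem_setOf_eq, not_forall] at hw
  obtain ⟨i, hi⟩ := hw
  have hxi := moving_coord hx hu i
  rw [Set.mem_Icc, not_and_or, not_le, not_le] at hi
  refine le_trans ?_ (coord_le_dist x w i)
  rcases hi with hlt | hgt
  · have h1 : (1/3) * ((2:ℝ)^n)⁻¹ ≤ x i - w i := by linarith [hxi.1]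
    exact le_trans h1 (le_abs_self _)
  · have h1 : (1/3) * ((2:ℝ)^n)⁻¹ ≤ w i - x i := by linarith [hxi.2]
    exact le_trans h1 (by rw [abs_sub_comm]; exact le_abs_self _)

lemma moving_image
    (hFdef : ∀ n, 1 ≤ n → ∀ x ∈ dyadicSq n, F x = affSq n (G n (affSqInv n x)))
    {n : ℕ} (hn : 1 ≤ n) {x : E} (hx : x ∈ dyadicSq n) (hu : affSqInv n x ∈ midSq)
    (hGmid : Set.MapsTo (G n) midSq midSq) (i : Fin 2) :
    F x i ∈ Set.Icc ((4/3) * ((2:ℝ)^n)⁻¹) ((5/3) * ((2:ℝ)^n)⁻¹) := by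
  rw [hFdef n hn x hx]
  have hy : G n (affSqInv n x) ∈ midSq := hGmid hu
  exact moving_coord (affSq_mem_dyadic (midSq_subset_unit hy))
    (by rw [affSqInv_affSq]; exact hy) i

lemma dist_F_self
    (hFdef : ∀ n, 1 ≤ n → ∀ x ∈ dyadicSq n, F x = affSq n (G n (affSqInv n x)))
    (hFid : ∀ x, (∀ n, 1 ≤ n → x ∉ dyadicSq n) → F x = x)
    (hGsupp : ∀ n, 1 ≤ n → ∀ y ∈ unitSq \ midSq, G n y = y)
    (hGmid : ∀ n, 1 ≤ n → Set.MapsTo (G n) midSq midSq)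
    (x : E) {D : ℝ} (hD : 0 ≤ D)
    (h : ∀ n, 1 ≤ n → x ∈ dyadicSq n → affSqInv n x ∈ midSq → (1/3) * ((2:ℝ)^n)⁻¹ ≤ D) :
    dist (F x) x ≤ 2 * D := by
  by_cases hm : Moving x
  · obtain ⟨n, hn, hx, hu⟩ := hm
    apply dist_le_of_coord hD
    intro i
    have a := moving_coord hx hu i
    have b := moving_image hFdef hn hx hu (hGmid n hn) i
    have hd := h n hn hx hu
    rw [abs_le]
    exact ⟨by linarith [a.2, b.1], by linarith [a.1, b.2]⟩
  · rw [not_moving_fix hFdef hFid hGsupp hm, dist_self]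
    linarith

lemma dist_F_self_one
    (hFdef : ∀ n, 1 ≤ n → ∀ x ∈ dyadicSq n, F x = affSq n (G n (affSqInv n x)))
    (hFid : ∀ x, (∀ n, 1 ≤ n → x ∉ dyadicSq n) → F x = x)
    (hGsupp : ∀ n, 1 ≤ n → ∀ y ∈ unitSq \ midSq, G n y = y)
    (hGmid : ∀ n, 1 ≤ n → Set.MapsTo (G n) midSq midSq)
    (x : E) : dist (F x) x ≤ 1 := by
  have := dist_F_self hFdef hFid hGsupp hGmid x (D := 1/2) (by norm_num) ?_
  · linarith
  · intro n hn _ _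
    have h2 : (2:ℝ) ≤ 2^n := by
      calc (2:ℝ) = 2^1 := (pow_one 2).symm
      _ ≤ 2^n := pow_le_pow_right₀ one_le_two hn
    have : ((2:ℝ)^n)⁻¹ ≤ 1/2 := by
      rw [inv_le_comm₀ (by positivity) (by norm_num)]
      linarith
    linarith

lemma caseA {n : ℕ} (hn : 1 ≤ n) {z w : E} (hz : z ∈ dyadicSq n) (hw : w ∈ dyadicSq n)
    (hFdef : ∀ n, 1 ≤ n → ∀ x ∈ dyadicSq n, F x = affSq n (G n (affSqInv n x)))
    (hGlip : ∀ x ∈ unitSq, ∀ y ∈ unitSq,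
      dist (G n x) (G n y) ≤ c * (n:ℝ) ^ p * dist x y) :
    dist (F z) (F w) ≤ c * (n:ℝ) ^ p * dist z w := by
  rw [hFdef n hn z hz, hFdef n hn w hw, dist_affSq]
  have h1 := hGlip _ (affSqInv_mem_unit hz) _ (affSqInv_mem_unit hw)
  rw [dist_affSqInv] at h1
  have h2 : (0:ℝ) < ((2:ℝ)^n)⁻¹ := by positivity
  have h3 : ((2:ℝ)^n) ≠ 0 := by positivity
  calc ((2:ℝ)^n)⁻¹ * dist (G n (affSqInv n z)) (G n (affSqInv n w))
      ≤ ((2:ℝ)^n)⁻¹ * (c * (n:ℝ)^p * ((2:ℝ)^n * dist z w)) :=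
        mul_le_mul_of_nonneg_left h1 h2.le
  _ = c * (n:ℝ)^p * dist z w := by field_simp

end Generic

section Numeric

lemma log_le_rpow_div {x ε : ℝ} (hx : 0 < x) (hε : 0 < ε) :
    Real.log x ≤ x ^ ε / ε := by
  have h1 : Real.log (x ^ ε) ≤ x ^ ε - 1 :=
    Real.log_le_sub_one_of_pos (Real.rpow_pos_of_pos hx ε)
  rw [Real.log_rpow hx] at h1
  rw [le_div_iff₀ hε, mul_comm]
  linarith

lemma n_le_log {n : ℕ} (hn : 1 ≤ n) {d : ℝ} (hd : 0 < d) (hd4 : d < 1/4)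
    (hdn : d ≤ 2 * ((2:ℝ)^n)⁻¹) : (n : ℝ) ≤ 3 * Real.log (1/d) := by
  have hlog2 : (0.6931471803 : ℝ) < Real.log 2 := Real.log_two_gt_d9
  have hL4 : Real.log 4 ≤ Real.log (1/d) := by
    apply Real.log_le_log (by norm_num)
    rw [le_div_iff₀ hd]; linarith
  have h4 : Real.log 4 = 2 * Real.log 2 := by
    rw [show (4:ℝ) = 2^2 by norm_num, Real.log_pow]; push_cast; ring
  -- d ≤ 2^{1-n} gives (n-1) * log 2 ≤ log (1/d)
  have key : ((n:ℝ) - 1) * Real.log 2 ≤ Real.log (1/d) := by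
    have h1 : d ≤ ((2:ℝ)^(n-1))⁻¹ := by
      have : (2:ℝ)^n = 2 * 2^(n-1) := by
        rw [← pow_succ']
        congr 1
        omega
      rw [this] at hdn
      rw [mul_inv] at hdn
      simpa using hdn
    have h2 : Real.log d ≤ Real.log ((2:ℝ)^(n-1))⁻¹ := Real.log_le_log hd h1
    rw [Real.log_inv, Real.log_pow] at h2
    rw [Real.log_div one_ne_zero hd.ne', Real.log_one]
    have hcast : ((n - 1 : ℕ) : ℝ) = (n:ℝ) - 1 := by
      push_cast [Nat.cast_sub hn]; ring
    rw [hcast] at h2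
    linarith
  have hL : 2 * Real.log 2 ≤ Real.log (1/d) := by rw [← h4]; exact hL4
  nlinarith [key, hL, hlog2]

lemma one_le_L {d : ℝ} (hd : 0 < d) (hd4 : d < 1/4) : 1 ≤ Real.log (1/d) := by
  have hlog2 : (0.6931471803 : ℝ) < Real.log 2 := Real.log_two_gt_d9
  have hL4 : Real.log 4 ≤ Real.log (1/d) := by
    apply Real.log_le_log (by norm_num)
    rw [le_div_iff₀ hd]; linarith
  have h4 : Real.log 4 = 2 * Real.log 2 := by
    rw [show (4:ℝ) = 2^2 by norm_num, Real.log_pow]; push_cast; ring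
  nlinarith

end Numeric

section Modulus

variable {G : ℕ → E → E} {F : E → E} {c p : ℝ}

lemma modulus (hp : 0 < p) (hc : 0 < c)
    (hFdef : ∀ n, 1 ≤ n → ∀ x ∈ dyadicSq n, F x = affSq n (G n (affSqInv n x)))
    (hFid : ∀ x, (∀ n, 1 ≤ n → x ∉ dyadicSq n) → F x = x)
    (hGsupp : ∀ n, 1 ≤ n → ∀ y ∈ unitSq \ midSq, G n y = y)
    (hGmid : ∀ n, 1 ≤ n → Set.MapsTo (G n) midSq midSq)
    (hGlip : ∀ n : ℕ, 1 ≤ n → ∀ x ∈ unitSq, ∀ y ∈ unitSq,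
      dist (G n x) (G n y) ≤ c * (n : ℝ) ^ p * dist x y)
    (z w : E) (hd : 0 < dist z w) (hd4 : dist z w < 1/4) :
    dist (F z) (F w) ≤ (c * 3 ^ p + 5) * dist z w * Real.log (1 / dist z w) ^ p := by
  set d := dist z w with hdd
  set L := Real.log (1/d) with hLd
  have hL1 : 1 ≤ L := one_le_L hd hd4
  have hLp1 : 1 ≤ L ^ p := by
    calc (1:ℝ) = 1 ^ p := (Real.one_rpow p).symm
    _ ≤ L ^ p := Real.rpow_le_rpow (by norm_num) hL1 hp.le
  have hLp0 : 0 ≤ L ^ p := by linarith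
  by_cases hzw : ∃ n, 1 ≤ n ∧ z ∈ dyadicSq n ∧ w ∈ dyadicSq n
  · obtain ⟨n, hn, hz, hw⟩ := hzw
    have h1 := caseA hn hz hw hFdef (hGlip n hn)
    -- d ≤ 2 * (2^n)⁻¹
    have hdn : d ≤ 2 * ((2:ℝ)^n)⁻¹ := by
      have hco : ∀ i, |z i - w i| ≤ ((2:ℝ)^n)⁻¹ := by
        intro i
        have a := hz i; have b := hw i
        rw [abs_le]
        constructor <;> [linarith [a.1, b.2]; linarith [a.2, b.1]]
      exact dist_le_of_coord (by positivity) hco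
    have hn3 : (n:ℝ) ≤ 3 * L := n_le_log hn hd hd4 hdn
    have hnp : (n:ℝ) ^ p ≤ 3 ^ p * L ^ p := by
      calc (n:ℝ) ^ p ≤ (3 * L) ^ p :=
        Real.rpow_le_rpow (Nat.cast_nonneg n) hn3 hp.le
      _ = 3 ^ p * L ^ p := Real.mul_rpow (by norm_num) (by linarith)
    calc dist (F z) (F w) ≤ c * (n:ℝ)^p * d := h1
    _ ≤ c * (3 ^ p * L ^ p) * d := by
        apply mul_le_mul_of_nonneg_right _ hd.le
        exact mul_le_mul_of_nonneg_left hnp hc.le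
    _ = c * 3 ^ p * d * L ^ p := by ring
    _ ≤ (c * 3 ^ p + 5) * d * L ^ p := by
        nlinarith [mul_nonneg hd.le hLp0]
  · -- no common square: displacements are at most 2d each
    have hz2 : dist (F z) z ≤ 2 * d := by
      by_cases hm : Moving z
      · obtain ⟨n, hn, hxz, hu⟩ := hm
        have hwn : w ∉ dyadicSq n := fun hyd => hzw ⟨n, hn, hxz, hyd⟩
        have hsep : (1/3) * ((2:ℝ)^n)⁻¹ ≤ d := sep hxz hu hwn
        apply dist_le_of_coord hd.le
        intro i
        have a := moving_coord hxz hu i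
        have b := moving_image hFdef hn hxz hu (hGmid n hn) i
        rw [abs_le]
        constructor
        · linarith [a.2, b.1]
        · linarith [a.1, b.2]
      · rw [not_moving_fix hFdef hFid hGsupp hm, dist_self]; linarith
    have hw2 : dist (F w) w ≤ 2 * d := by
      by_cases hm : Moving w
      · obtain ⟨n, hn, hxw, hu⟩ := hm
        have hzn : z ∉ dyadicSq n := fun hyd => hzw ⟨n, hn, hyd, hxw⟩
        have hsep : (1/3) * ((2:ℝ)^n)⁻¹ ≤ d := by
          have := sep hxw hu hzn
          rwa [dist_comm] at this
        apply dist_le_of_coord hd.le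
        intro i
        have a := moving_coord hxw hu i
        have b := moving_image hFdef hn hxw hu (hGmid n hn) i
        rw [abs_le]
        constructor
        · linarith [a.2, b.1]
        · linarith [a.1, b.2]
      · rw [not_moving_fix hFdef hFid hGsupp hm, dist_self]; linarith
    have h3p : (0:ℝ) < c * 3 ^ p := by positivity
    calc dist (F z) (F w) ≤ dist (F z) z + dist z w + dist w (F w) := dist_triangle4 _ _ _ _
    _ ≤ 2 * d + d + 2 * d := by
        rw [dist_comm w (F w)]
        exact add_le_add (add_le_add hz2 le_rfl) hw2
    _ = 5 * d := by ring
    _ ≤ (c * 3 ^ p + 5) * d * L ^ p := by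
        nlinarith [mul_nonneg (mul_nonneg h3p.le hd.le) hLp0,
          mul_nonneg hd.le (sub_nonneg.2 hLp1)]

end Modulus

section Holder

variable {F : E → E} {p : ℝ}

lemma holder_of_modulus {C : ℝ} (hC : 0 < C) (hp : 0 < p)
    (hmod : ∀ z w : E, 0 < dist z w → dist z w < 1/4 →
      dist (F z) (F w) ≤ C * dist z w * Real.log (1 / dist z w) ^ p)
    (hdisp : ∀ x : E, dist (F x) x ≤ 1)
    {α : ℝ} (hα0 : 0 < α) (hα1 : α < 1) :
    ∃ K : ℝ, 0 < K ∧ ∀ z w : E, dist z w ≤ 1 →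
      dist (F z) (F w) ≤ K * dist z w ^ α := by
  have hε0 : 0 < (1 - α) / (2 * p) := div_pos (by linarith) (by linarith)
  set ε := (1 - α) / (2 * p) with hεdef
  have hεp : ε * p = (1 - α) / 2 := by
    rw [hεdef]; field_simp
  refine ⟨C / ε ^ p + 12, by positivity, fun z w hd1 => ?_⟩
  by_cases hd0 : dist z w = 0
  · have hzw : z = w := dist_eq_zero.1 hd0
    subst hzw
    rw [dist_self, dist_self, Real.zero_rpow hα0.ne', mul_zero]
  have hd : 0 < dist z w := lt_of_le_of_ne dist_nonneg (Ne.symm hd0)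
  have hdα : (0:ℝ) ≤ dist z w ^ α := Real.rpow_nonneg dist_nonneg α
  have hCe : 0 < C / ε ^ p := by positivity
  by_cases hsm : dist z w < 1/4
  · have h1 := hmod z w hd hsm
    have hL0 : 0 ≤ Real.log (1 / dist z w) := by
      apply Real.log_nonneg
      rw [le_div_iff₀ hd]; linarith
    have h2 : Real.log (1 / dist z w) ≤ (1 / dist z w) ^ ε / ε :=
      log_le_rpow_div (by positivity) hε0
    have h3 : Real.log (1 / dist z w) ^ p ≤ ((1 / dist z w) ^ ε / ε) ^ p :=
      Real.rpow_le_rpow hL0 h2 hp.le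
    have h4 : ((1 / dist z w) ^ ε / ε) ^ p = dist z w ^ (-(ε * p)) / ε ^ p := by
      rw [Real.div_rpow (by positivity) hε0.le]
      congr 1
      rw [one_div, Real.inv_rpow hd.le, ← Real.rpow_neg hd.le, ← Real.rpow_mul hd.le]
      ring_nf
    have h5 : dist z w * dist z w ^ (-(ε * p)) = dist z w ^ (1 - ε * p) := by
      nth_rewrite 1 [← Real.rpow_one (dist z w)]
      rw [← Real.rpow_add hd]
      ring_nf
    have h6 : dist z w ^ (1 - ε * p) ≤ dist z w ^ α := by
      apply Real.rpow_le_rpow_of_exponent_ge hd hd1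
      rw [hεp]; linarith
    have hLp : 0 ≤ Real.log (1 / dist z w) ^ p := Real.rpow_nonneg hL0 p
    calc dist (F z) (F w) ≤ C * dist z w * Real.log (1 / dist z w) ^ p := h1
    _ ≤ C * dist z w * (dist z w ^ (-(ε * p)) / ε ^ p) := by
        apply mul_le_mul_of_nonneg_left (le_trans h3 (le_of_eq h4))
        positivity
    _ = (C / ε ^ p) * (dist z w * dist z w ^ (-(ε * p))) := by ring
    _ = (C / ε ^ p) * dist z w ^ (1 - ε * p) := by rw [h5]
    _ ≤ (C / ε ^ p) * dist z w ^ α := mul_le_mul_of_nonneg_left h6 hCe.le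
    _ ≤ (C / ε ^ p + 12) * dist z w ^ α := by nlinarith
  · push_neg at hsm
    have h1 : dist (F z) (F w) ≤ 3 := by
      have d1 := hdisp z
      have d2 := hdisp w
      calc dist (F z) (F w) ≤ dist (F z) z + dist z w + dist w (F w) :=
        dist_triangle4 _ _ _ _
      _ ≤ 1 + 1 + 1 := by
          rw [dist_comm w (F w)]
          exact add_le_add (add_le_add d1 hd1) d2
      _ = 3 := by norm_num
    have h2 : (1/4:ℝ) ≤ dist z w ^ α := by
      calc (1/4:ℝ) = (1/4:ℝ) ^ (1:ℝ) := (Real.rpow_one _).symm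
      _ ≤ (1/4:ℝ) ^ α := Real.rpow_le_rpow_of_exponent_ge (by norm_num) (by norm_num) hα1.le
      _ ≤ dist z w ^ α := Real.rpow_le_rpow (by norm_num) hsm hα0.le
    nlinarith [mul_nonneg hCe.le hdα]

lemma cont_of_holder {F : E → E} {K : ℝ} (hK : 0 < K)
    (h : ∀ z w : E, dist z w ≤ 1 → dist (F z) (F w) ≤ K * dist z w ^ ((2:ℝ)⁻¹)) :
    Continuous F := by
  rw [Metric.continuous_iff]
  intro b ε hε
  refine ⟨min 1 ((ε / (2*K))^2), lt_min one_pos (by positivity), fun a ha => ?_⟩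
  have ha1 : dist a b ≤ 1 := le_of_lt (lt_of_lt_of_le ha (min_le_left _ _))
  have ha2 : dist a b ≤ (ε/(2*K))^2 := le_of_lt (lt_of_lt_of_le ha (min_le_right _ _))
  have h0 : (0:ℝ) ≤ ε/(2*K) := by positivity
  have key : ((ε/(2*K))^2) ^ ((2:ℝ)⁻¹) = ε/(2*K) := by
    rw [← Real.rpow_natCast (ε/(2*K)) 2, ← Real.rpow_mul h0]
    norm_num
  have hKne : K ≠ 0 := hK.ne'
  calc dist (F a) (F b) ≤ K * dist a b ^ ((2:ℝ)⁻¹) := h a b ha1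
  _ ≤ K * ((ε/(2*K))^2) ^ ((2:ℝ)⁻¹) := by
      apply mul_le_mul_of_nonneg_left _ hK.le
      exact Real.rpow_le_rpow dist_nonneg ha2 (by norm_num)
  _ = K * (ε/(2*K)) := by rw [key]
  _ = ε/2 := by field_simp
  _ < ε := by linarith

end Holder

section Entropy

open Dynamics ENNReal EReal Uniformity

lemma coverEntropy_mono {X : Type*} [UniformSpace X] (T : X → X) {A B : Set X} (h : A ⊆ B) :
    coverEntropy T A ≤ coverEntropy T B := by
  refine iSup₂_mono fun U _ => ?_
  refine Filter.limsup_le_limsup (Filter.Eventually.of_forall fun n => ?_)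
  apply monotone_div_right_of_nonneg (Nat.cast_nonneg' n)
  apply log_monotone
  apply ENat.toENNReal_mono
  exact biInf_mono fun s hs => Set.Subset.trans h hs

lemma entropy_le {gn : E → E} {F : E → E} {n : ℕ} (hn : 1 ≤ n)
    (hgmaps : Set.MapsTo gn unitSq unitSq)
    (hFd : ∀ x ∈ dyadicSq n, F x = affSq n (gn (affSqInv n x))) :
    coverEntropy gn unitSq ≤ coverEntropy F unitSq := by
  set Gt := fun x => affSqInv n (F (affSq n x)) with hGt
  have hsemi2 : Function.Semiconj (affSqInv n) F Gt := by
    intro x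
    show affSqInv n (F x) = affSqInv n (F (affSq n (affSqInv n x)))
    rw [affSq_affSqInv]
  have hucInv : UniformContinuous (affSqInv n) := by
    refine (LipschitzWith.of_dist_le_mul (K := ⟨(2:ℝ)^n, by positivity⟩) fun x y => ?_).uniformContinuous
    rw [dist_affSqInv]
    exact le_rfl
  have hagree : ∀ x ∈ unitSq, Gt x = gn x := by
    intro x hx
    show affSqInv n (F (affSq n x)) = gn x
    rw [hFd _ (affSq_mem_dyadic hx), affSqInv_affSq, affSqInv_affSq]
  have hGtmaps : Set.MapsTo Gt unitSq unitSq := by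
    intro x hx
    rw [hagree x hx]; exact hgmaps hx
  have hres : coverEntropy gn unitSq = coverEntropy Gt unitSq := by
    rw [← coverEntropy_restrict hgmaps, ← coverEntropy_restrict hGtmaps]
    congr 1
    funext x
    apply Subtype.ext
    show gn x.1 = Gt x.1
    exact (hagree x.1 x.2).symm
  rw [hres]
  have himg : affSqInv n '' dyadicSq n = unitSq := by
    apply Set.Subset.antisymm
    · rintro y ⟨x, hx, rfl⟩
      exact affSqInv_mem_unit hx
    · intro y hy
      exact ⟨affSq n y, affSq_mem_dyadic hy, affSqInv_affSq n y⟩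
  calc coverEntropy Gt unitSq = coverEntropy Gt (affSqInv n '' dyadicSq n) := by rw [himg]
  _ ≤ coverEntropy F (dyadicSq n) :=
      coverEntropy_image_le_of_uniformContinuous hsemi2 hucInv _
  _ ≤ coverEntropy F unitSq := coverEntropy_mono F (dyadic_subset_unit hn)

lemma entropy_top {g : ℕ → E → E} {F : E → E}
    (hkey : ∀ n, 1 ≤ n → coverEntropy (g n) unitSq ≤ coverEntropy F unitSq)
    (hent : Filter.Tendsto (fun n => coverEntropy (g n) unitSq) Filter.atTop (nhds ⊤)) :
    coverEntropy F unitSq = ⊤ := by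
  have h : (⊤ : EReal) ≤ coverEntropy F unitSq :=
    le_of_tendsto hent (Filter.eventually_atTop.2 ⟨1, hkey⟩)
  exact top_le_iff.1 h

end Entropy

section Corner

lemma two_inv_le {a b : ℕ} (h : a < b) : 2 * ((2:ℝ)^b)⁻¹ ≤ ((2:ℝ)^a)⁻¹ := by
  have h1 : (2:ℝ)^(a+1) ≤ 2^b := pow_le_pow_right₀ one_le_two h
  have h2 : ((2:ℝ)^b)⁻¹ ≤ ((2:ℝ)^(a+1))⁻¹ := by
    apply inv_anti₀ (by positivity) h1
  have h3 : ((2:ℝ)^(a+1)) = 2 * 2^a := by rw [pow_succ]; ring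
  calc 2 * ((2:ℝ)^b)⁻¹ ≤ 2 * ((2:ℝ)^(a+1))⁻¹ := by linarith
  _ = ((2:ℝ)^a)⁻¹ := by rw [h3]; field_simp

lemma corner_not_mid {n m : ℕ} (hnm : n ≠ m) {x : E}
    (hx : x ∈ dyadicSq n) (hx' : x ∈ dyadicSq m) : affSqInv n x ∉ midSq := by
  intro hmid
  have h0 := hmid 0
  rw [affSqInv_apply] at h0
  have a := hx 0
  have b := hx' 0
  have h2n : (0:ℝ) < 2^n := by positivity
  rcases lt_or_gt_of_ne hnm with h | h
  · have key : 2 * ((2:ℝ)^m)⁻¹ ≤ ((2:ℝ)^n)⁻¹ := two_inv_le h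
    have hx0 : x 0 ≤ ((2:ℝ)^n)⁻¹ := le_trans b.2 key
    have : (2:ℝ)^n * x 0 ≤ 1 := by
      calc (2:ℝ)^n * x 0 ≤ (2:ℝ)^n * ((2:ℝ)^n)⁻¹ :=
        mul_le_mul_of_nonneg_left hx0 h2n.le
      _ = 1 := mul_inv_cancel₀ h2n.ne'
    linarith [h0.1]
  · have key : 2 * ((2:ℝ)^n)⁻¹ ≤ ((2:ℝ)^m)⁻¹ := two_inv_le h
    have hx0 : 2 * ((2:ℝ)^n)⁻¹ ≤ x 0 := le_trans key b.1
    have : (2:ℝ) ≤ (2:ℝ)^n * x 0 := by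
      have := mul_le_mul_of_nonneg_left hx0 h2n.le
      calc (2:ℝ) = (2:ℝ)^n * (2 * ((2:ℝ)^n)⁻¹) := by field_simp
      _ ≤ (2:ℝ)^n * x 0 := this
    linarith [h0.2]

end Corner

section Isotopy

lemma isotopy {f fi : E → E} (hfc : Continuous f) (hfic : Continuous fi)
    (hl : Function.LeftInverse fi f) (hr : Function.RightInverse fi f)
    (hdisp : ∀ x, dist (f x) x ≤ 1) :
    ∃ H : ℝ → E → E,
      Continuous (fun q : ℝ × E => H q.1 q.2) ∧ (∀ x, H 0 x = x) ∧ (∀ x, H 1 x = f x) ∧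
      (∀ t ∈ Set.Icc (0:ℝ) 1, IsHomeomorph (H t)) := by
  set s : ℝ → ℝ := fun t => max 0 (min t 1) with hs
  have hscont : Continuous s := continuous_const.max (continuous_id.min continuous_const)
  set D : E → E := fun y => f y - y with hD
  have hDcont : Continuous D := hfc.sub continuous_id
  have hDb : ∀ y, ‖D y‖ ≤ 1 := fun y => by
    rw [hD]; simpa [dist_eq_norm] using hdisp y
  have hspos : ∀ t : ℝ, 0 < t → 0 < s t := fun t ht =>
    lt_max_iff.2 (Or.inr (lt_min ht one_pos))
  have hszero : ∀ t : ℝ, t ≤ 0 → s t = 0 := by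
    intro t ht
    rw [hs]
    dsimp only
    rw [min_eq_left (le_trans ht zero_le_one), max_eq_left ht]
  set φ : ℝ × E → E := fun q => if 0 < s q.1 then s q.1 • D ((s q.1)⁻¹ • q.2) else 0 with hφ
  have hφb : ∀ q : ℝ × E, ‖φ q‖ ≤ s q.1 := by
    intro q
    rw [hφ]
    dsimp only
    split_ifs with h
    · rw [norm_smul, Real.norm_eq_abs, abs_of_pos h]
      calc s q.1 * ‖D ((s q.1)⁻¹ • q.2)‖ ≤ s q.1 * 1 :=
        mul_le_mul_of_nonneg_left (hDb _) h.le
      _ = s q.1 := mul_one _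
    · rw [norm_zero]
      exact le_max_left 0 _
  have hφcont : Continuous φ := by
    rw [continuous_iff_continuousAt]
    intro q₀
    by_cases hq : 0 < q₀.1
    · have hne : s q₀.1 ≠ 0 := (hspos _ hq).ne'
      have h1 : ContinuousAt (fun q : ℝ × E => s q.1) q₀ :=
        (hscont.comp continuous_fst).continuousAt
      have hψ : ContinuousAt (fun q : ℝ × E => s q.1 • D ((s q.1)⁻¹ • q.2)) q₀ :=
        h1.smul (hDcont.continuousAt.comp ((h1.inv₀ hne).smul continuous_snd.continuousAt))
      apply hψ.congr
      have hmem : {q : ℝ × E | 0 < q.1} ∈ nhds q₀ :=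
        (isOpen_lt continuous_const continuous_fst).mem_nhds hq
      filter_upwards [hmem] with q hq2
      rw [hφ]
      dsimp only
      rw [if_pos (hspos _ hq2)]
    · have hs0 : s q₀.1 = 0 := hszero _ (not_lt.1 hq)
      have hφ0 : φ q₀ = 0 := by
        rw [hφ]
        dsimp only
        rw [if_neg (by rw [hs0]; exact lt_irrefl 0)]
      unfold ContinuousAt
      rw [hφ0]
      apply squeeze_zero_norm hφb
      have h2 : Filter.Tendsto (fun q : ℝ × E => s q.1) (nhds q₀) (nhds (s q₀.1)) :=
        (hscont.comp continuous_fst).continuousAt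
      rwa [hs0] at h2
  refine ⟨fun t x => x + φ (t, x), ?_, ?_, ?_, ?_⟩
  · exact continuous_snd.add hφcont
  · intro x
    show x + φ (0, x) = x
    have : φ (0, x) = 0 := by
      rw [hφ]
      dsimp only
      rw [if_neg (by rw [hszero 0 le_rfl]; exact lt_irrefl 0)]
    rw [this, add_zero]
  · intro x
    show x + φ (1, x) = f x
    have hs1 : s 1 = 1 := by rw [hs]; norm_num
    have : φ (1, x) = f x - x := by
      rw [hφ]
      dsimp only
      rw [if_pos (by rw [hs1]; norm_num), hs1, inv_one, one_smul, one_smul]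
    rw [this, add_sub_cancel]
  · intro t ht
    show IsHomeomorph (fun x => x + φ (t, x))
    by_cases h : 0 < t
    · have hst : s t = t := by
        rw [hs]
        dsimp only
        rw [min_eq_left ht.2, max_eq_right ht.1]
      have hform : (fun x => x + φ (t, x)) = fun x => t • f (t⁻¹ • x) := by
        funext x
        rw [hφ]
        dsimp only
        rw [if_pos (by rw [hst]; exact h), hst, hD]
        dsimp only
        rw [smul_sub, smul_inv_smul₀ h.ne']
        abel
      rw [hform, isHomeomorph_iff_exists_inverse]
      refine ⟨by fun_prop,
        fun y => t • fi (t⁻¹ • y), fun x => ?_, fun y => ?_,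
        by fun_prop⟩
      · show t • fi (t⁻¹ • (t • f (t⁻¹ • x))) = x
        rw [inv_smul_smul₀ h.ne', hl _, smul_inv_smul₀ h.ne']
      · show t • f (t⁻¹ • (t • fi (t⁻¹ • y))) = y
        rw [inv_smul_smul₀ h.ne', hr _, smul_inv_smul₀ h.ne']
    · have ht0 : t = 0 := le_antisymm (not_lt.1 h) ht.1
      have hform : (fun x => x + φ (t, x)) = id := by
        funext x
        rw [hφ]
        dsimp only
        rw [if_neg (by rw [ht0, hszero 0 le_rfl]; exact lt_irrefl 0), add_zero, id]
      rw [hform]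
      exact (Homeomorph.refl E).isHomeomorph

end Isotopy

end InfEnt

/-- **Planar homeomorphisms with infinite entropy which are Hölder of every exponent**:
let `p, c > 0` and let `(g_n)_{n ≥ 1}` be homeomorphisms of `Q = [0,1]²` onto itself, equal
to the identity off `R = [1/3,2/3]²`, bi-Lipschitz with `[g_n]_Lip, [g_n⁻¹]_Lip ≤ c·n^p`,
and with `h_top(g_n) → ∞`.  Define `f = A_n ∘ g_n ∘ A_n⁻¹` on each `Q_n` and `f = id`
elsewhere.  Then `f` is an orientation-preserving homeomorphism of `ℝ²` (isotopic to the
identity through homeomorphisms), equal to the identity off `Q` and mapping `Q` onto `Q`;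
the restriction of `f` to `Q` has infinite topological entropy; there are `C, δ > 0` with
`|f(z)-f(w)| ≤ C·|z-w|·(log (1/|z-w|))^p` whenever `0 < |z-w| < δ`, and likewise for
`f⁻¹`; and `f`, `f⁻¹` are `α`-Hölder continuous for every `0 < α < 1`. -/
theorem infinite_entropy_holder_example (p c : ℝ) (hp : 0 < p) (hc : 0 < c)
    (g gi : ℕ → EuclideanSpace ℝ (Fin 2) → EuclideanSpace ℝ (Fin 2))
    (hbij : ∀ n, 1 ≤ n → Set.BijOn (g n) unitSq unitSq)
    (hcont : ∀ n, 1 ≤ n → ContinuousOn (g n) unitSq)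
    (hginv : ∀ n, 1 ≤ n → Set.InvOn (gi n) (g n) unitSq unitSq)
    (hsupp : ∀ n, 1 ≤ n → ∀ x ∈ unitSq \ midSq, g n x = x)
    (hlip : ∀ n : ℕ, 1 ≤ n → ∀ x ∈ unitSq, ∀ y ∈ unitSq,
      dist (g n x) (g n y) ≤ c * (n : ℝ) ^ p * dist x y)
    (hlipi : ∀ n : ℕ, 1 ≤ n → ∀ x ∈ unitSq, ∀ y ∈ unitSq,
      dist (gi n x) (gi n y) ≤ c * (n : ℝ) ^ p * dist x y)
    (hent : Tendsto (fun n => Dynamics.coverEntropy (g n) unitSq) atTop (nhds ⊤))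
    (f : EuclideanSpace ℝ (Fin 2) → EuclideanSpace ℝ (Fin 2))
    (hfdef : ∀ n, 1 ≤ n → ∀ x ∈ dyadicSq n, f x = affSq n (g n (affSqInv n x)))
    (hfid : ∀ x, (∀ n, 1 ≤ n → x ∉ dyadicSq n) → f x = x) :
    ∃ (fi : EuclideanSpace ℝ (Fin 2) → EuclideanSpace ℝ (Fin 2))
      (H : ℝ → EuclideanSpace ℝ (Fin 2) → EuclideanSpace ℝ (Fin 2)),
      Continuous f ∧ Continuous fi ∧
      Function.LeftInverse fi f ∧ Function.RightInverse fi f ∧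
      -- orientation preserving: `f` is isotopic to the identity through homeomorphisms
      Continuous (fun q : ℝ × EuclideanSpace ℝ (Fin 2) => H q.1 q.2) ∧
      (∀ x, H 0 x = x) ∧ (∀ x, H 1 x = f x) ∧
      (∀ t ∈ Set.Icc (0 : ℝ) 1, IsHomeomorph (H t)) ∧
      -- `f` is the identity off `Q` and maps `Q` onto `Q`
      (∀ x ∉ unitSq, f x = x) ∧ f '' unitSq = unitSq ∧
      -- the restriction of `f` to `Q` has infinite topological entropy
      Dynamics.coverEntropy f unitSq = ⊤ ∧
      -- modulus of continuity `Λ_p(t) = t |log t|^p` for `f` and `f⁻¹`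
      (∃ C δ : ℝ, 0 < C ∧ 0 < δ ∧ ∀ z w, 0 < dist z w → dist z w < δ →
        dist (f z) (f w) ≤ C * dist z w * Real.log (1 / dist z w) ^ p ∧
        dist (fi z) (fi w) ≤ C * dist z w * Real.log (1 / dist z w) ^ p) ∧
      -- `f` and `f⁻¹` are `α`-Hölder continuous for every `0 < α < 1`
      (∀ α : ℝ, 0 < α → α < 1 → ∃ K : ℝ, 0 < K ∧ ∀ z w, dist z w ≤ 1 →
        dist (f z) (f w) ≤ K * dist z w ^ α ∧ dist (fi z) (fi w) ≤ K * dist z w ^ α) := by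
  classical
  have hgmid : ∀ n, 1 ≤ n → Set.MapsTo (g n) midSq midSq :=
    fun n hn => InfEnt.mapsTo_mid (hbij n hn) (hsupp n hn)
  have hgisupp : ∀ n, 1 ≤ n → ∀ y ∈ unitSq \ midSq, gi n y = y := by
    intro n hn y hy
    have h1 : g n y = y := hsupp n hn y hy
    have h2 := (hginv n hn).1 hy.1
    rw [h1] at h2
    exact h2
  have hgibij : ∀ n, 1 ≤ n → Set.BijOn (gi n) unitSq unitSq :=
    fun n hn => Set.BijOn.symm (hginv n hn).symm (hbij n hn)
  have hgimid : ∀ n, 1 ≤ n → Set.MapsTo (gi n) midSq midSq :=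
    fun n hn => InfEnt.mapsTo_mid (hgibij n hn) (hgisupp n hn)
  set fi : EuclideanSpace ℝ (Fin 2) → EuclideanSpace ℝ (Fin 2) := fun x =>
    if h : ∃ n, 1 ≤ n ∧ x ∈ dyadicSq n then
      affSq h.choose (gi h.choose (affSqInv h.choose x))
    else x with hfi
  have hfidef : ∀ n, 1 ≤ n → ∀ x ∈ dyadicSq n, fi x = affSq n (gi n (affSqInv n x)) := by
    intro n hn x hx
    have hex : ∃ k, 1 ≤ k ∧ x ∈ dyadicSq k := ⟨n, hn, hx⟩
    rw [hfi]
    dsimp only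
    rw [dif_pos hex]
    obtain ⟨hm1, hmx⟩ := hex.choose_spec
    by_cases hmn : hex.choose = n
    · rw [hmn]
    · rw [InfEnt.fix_formula hmx (InfEnt.corner_not_mid hmn hmx hx) (hgisupp _ hm1),
        InfEnt.fix_formula hx (InfEnt.corner_not_mid (Ne.symm hmn) hx hmx) (hgisupp n hn)]
  have hfiid : ∀ x, (∀ n, 1 ≤ n → x ∉ dyadicSq n) → fi x = x := by
    intro x hx
    rw [hfi]
    dsimp only
    rw [dif_neg]
    rintro ⟨n, hn, hxn⟩
    exact hx n hn hxn
  have hleft : Function.LeftInverse fi f := by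
    intro x
    by_cases hd : ∃ n, 1 ≤ n ∧ x ∈ dyadicSq n
    · obtain ⟨n, hn, hx⟩ := hd
      have hu : affSqInv n x ∈ unitSq := InfEnt.affSqInv_mem_unit hx
      have hfx : f x = affSq n (g n (affSqInv n x)) := hfdef n hn x hx
      have hgu : g n (affSqInv n x) ∈ unitSq := (hbij n hn).mapsTo hu
      have hfxd : f x ∈ dyadicSq n := by
        rw [hfx]; exact InfEnt.affSq_mem_dyadic hgu
      rw [hfidef n hn _ hfxd, hfx, InfEnt.affSqInv_affSq, (hginv n hn).1 hu,
        InfEnt.affSq_affSqInv]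
    · have h1 : f x = x := hfid x (fun n hn hxn => hd ⟨n, hn, hxn⟩)
      rw [h1]
      exact hfiid x (fun n hn hxn => hd ⟨n, hn, hxn⟩)
  have hright : Function.RightInverse fi f := by
    intro x
    by_cases hd : ∃ n, 1 ≤ n ∧ x ∈ dyadicSq n
    · obtain ⟨n, hn, hx⟩ := hd
      have hu : affSqInv n x ∈ unitSq := InfEnt.affSqInv_mem_unit hx
      have hfix : fi x = affSq n (gi n (affSqInv n x)) := hfidef n hn x hx
      have hgu : gi n (affSqInv n x) ∈ unitSq := (hgibij n hn).mapsTo hu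
      have hfixd : fi x ∈ dyadicSq n := by
        rw [hfix]; exact InfEnt.affSq_mem_dyadic hgu
      rw [hfdef n hn _ hfixd, hfix, InfEnt.affSqInv_affSq, (hginv n hn).2 hu,
        InfEnt.affSq_affSqInv]
    · have h1 : fi x = x := hfiid x (fun n hn hxn => hd ⟨n, hn, hxn⟩)
      rw [h1]
      exact hfid x (fun n hn hxn => hd ⟨n, hn, hxn⟩)
  have hmodf : ∀ z w, 0 < dist z w → dist z w < 1/4 →
      dist (f z) (f w) ≤ (c * 3 ^ p + 5) * dist z w * Real.log (1 / dist z w) ^ p :=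
    fun z w hd hd4 => InfEnt.modulus hp hc hfdef hfid hsupp hgmid hlip z w hd hd4
  have hmodfi : ∀ z w, 0 < dist z w → dist z w < 1/4 →
      dist (fi z) (fi w) ≤ (c * 3 ^ p + 5) * dist z w * Real.log (1 / dist z w) ^ p :=
    fun z w hd hd4 => InfEnt.modulus hp hc hfidef hfiid hgisupp hgimid hlipi z w hd hd4
  have hdispf : ∀ x, dist (f x) x ≤ 1 := InfEnt.dist_F_self_one hfdef hfid hsupp hgmid
  have hdispfi : ∀ x, dist (fi x) x ≤ 1 := InfEnt.dist_F_self_one hfidef hfiid hgisupp hgimid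
  have hCpos : 0 < c * 3 ^ p + 5 := by positivity
  have hholderf : ∀ α : ℝ, 0 < α → α < 1 → ∃ K, 0 < K ∧ ∀ z w, dist z w ≤ 1 →
      dist (f z) (f w) ≤ K * dist z w ^ α :=
    fun α h0 h1 => InfEnt.holder_of_modulus hCpos hp hmodf hdispf h0 h1
  have hholderfi : ∀ α : ℝ, 0 < α → α < 1 → ∃ K, 0 < K ∧ ∀ z w, dist z w ≤ 1 →
      dist (fi z) (fi w) ≤ K * dist z w ^ α :=
    fun α h0 h1 => InfEnt.holder_of_modulus hCpos hp hmodfi hdispfi h0 h1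
  obtain ⟨Kf, hKf, hKf2⟩ := hholderf ((2:ℝ)⁻¹) (by norm_num) (by norm_num)
  obtain ⟨Kfi, hKfi, hKfi2⟩ := hholderfi ((2:ℝ)⁻¹) (by norm_num) (by norm_num)
  have hfc : Continuous f := InfEnt.cont_of_holder hKf hKf2
  have hfic : Continuous fi := InfEnt.cont_of_holder hKfi hKfi2
  have hoff : ∀ x ∉ unitSq, f x = x := by
    intro x hx
    apply hfid
    intro n hn hxn
    exact hx (InfEnt.dyadic_subset_unit hn hxn)
  have hmapsf : Set.MapsTo f unitSq unitSq := by
    intro x hx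
    by_cases hd : ∃ n, 1 ≤ n ∧ x ∈ dyadicSq n
    · obtain ⟨n, hn, hxn⟩ := hd
      rw [hfdef n hn x hxn]
      exact InfEnt.dyadic_subset_unit hn
        (InfEnt.affSq_mem_dyadic ((hbij n hn).mapsTo (InfEnt.affSqInv_mem_unit hxn)))
    · rw [hfid x (fun n hn h => hd ⟨n, hn, h⟩)]; exact hx
  have hmapsfi : Set.MapsTo fi unitSq unitSq := by
    intro x hx
    by_cases hd : ∃ n, 1 ≤ n ∧ x ∈ dyadicSq n
    · obtain ⟨n, hn, hxn⟩ := hd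
      rw [hfidef n hn x hxn]
      exact InfEnt.dyadic_subset_unit hn
        (InfEnt.affSq_mem_dyadic ((hgibij n hn).mapsTo (InfEnt.affSqInv_mem_unit hxn)))
    · rw [hfiid x (fun n hn h => hd ⟨n, hn, h⟩)]; exact hx
  have himg : f '' unitSq = unitSq := by
    apply Set.Subset.antisymm (Set.image_subset_iff.2 hmapsf)
    intro y hy
    exact ⟨fi y, hmapsfi hy, hright y⟩
  have hentf : Dynamics.coverEntropy f unitSq = ⊤ := by
    apply InfEnt.entropy_top (g := g) ?_ hent
    intro n hn
    exact InfEnt.entropy_le hn (hbij n hn).mapsTo (hfdef n hn)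
  obtain ⟨H, hH1, hH2, hH3, hH4⟩ := InfEnt.isotopy hfc hfic hleft hright hdispf
  refine ⟨fi, H, hfc, hfic, hleft, hright, hH1, hH2, hH3, hH4, hoff, himg, hentf, ?_, ?_⟩
  · exact ⟨c * 3 ^ p + 5, 1/4, hCpos, by norm_num,
      fun z w hd hd4 => ⟨hmodf z w hd hd4, hmodfi z w hd hd4⟩⟩
  · intro α h0 h1
    obtain ⟨K1, hK1, hK1b⟩ := hholderf α h0 h1
    obtain ⟨K2, hK2, hK2b⟩ := hholderfi α h0 h1
    refine ⟨K1 + K2, by linarith, fun z w hd => ?_⟩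
    have h3 : 0 ≤ dist z w ^ α := Real.rpow_nonneg dist_nonneg α
    constructor
    · refine le_trans (hK1b z w hd) ?_
      nlinarith
    · refine le_trans (hK2b z w hd) ?_
      nlinarith
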